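/- The queue automaton of Figure 2 accepts exactly the language { aⁿbⁿcⁿ | n > 0 }. -/

import Mathlib

/-- A labelled transition system with silent action `τ` modelled as `none`. -/
structure LTS (S A : Type) where
  tr : S → Option A → S → Prop
  fin : S → Prop

/-- Zero or more τ-steps. -/
def LTS.tauStar {S A : Type} (L : LTS S A) : S → S → Prop :=
  Relation.ReflTransGen (fun s t => L.tr s none t)

/-- `s →(a) t` : either `s →a t`, or `a = τ` and `s = t`. -/
def LTS.optStep {S A : Type} (L : LTS S A) (s : S) (a : Option A) (t : S) : Prop :=
  L.tr s a t ∨ (a = none ∧ s = t)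

/-- A symmetric relation `R` is a strong bisimulation. -/
def IsStrongBisim {S A : Type} (L : LTS S A) (R : S → S → Prop) : Prop :=
  (∀ s t, R s t → R t s) ∧
  (∀ s t, R s t →
    (∀ a s', L.tr s a s' → ∃ t', L.tr t a t' ∧ R s' t') ∧
    (L.fin s → L.fin t))

/-- Strong bisimilarity: related by some strong bisimulation. -/
def Bisim {S A : Type} (L : LTS S A) (s t : S) : Prop :=
  ∃ R, IsStrongBisim L R ∧ R s t

/-- A symmetric relation `R` is a branching bisimulation. -/
def IsBranchingBisim {S A : Type} (L : LTS S A) (R : S → S → Prop) : Prop :=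
  (∀ s t, R s t → R t s) ∧
  (∀ s t, R s t →
    (∀ a s', L.tr s a s' →
      ∃ t'' t', L.tauStar t t'' ∧ L.optStep t'' a t' ∧ R s t'' ∧ R s' t') ∧
    (L.fin s → ∃ t', L.tauStar t t' ∧ L.fin t'))

/-- Branching bisimilarity: related by some branching bisimulation. -/
def BBisim {S A : Type} (L : LTS S A) (s t : S) : Prop :=
  ∃ R, IsBranchingBisim L R ∧ R s t

/-- Weak word transitions: τ-steps do not contribute to the word. -/
inductive WStep {S A : Type} (L : LTS S A) : S → List A → S → Prop
  | refl (s : S) : WStep L s [] s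
  | act {s t u : S} {a : A} {w : List A} :
      L.tr s (some a) t → WStep L t w u → WStep L s (a :: w) u
  | tau {s t u : S} {w : List A} :
      L.tr s none t → WStep L t w u → WStep L s w u

/-- The language of a state: words leading to a terminating state. -/
def LTS.lang {S A : Type} (L : LTS S A) (s : S) : Set (List A) :=
  { w | ∃ t, WStep L s w t ∧ L.fin t }

/-- The head condition of a queue-automaton transition: `ε`, `*`, or a datum. -/
inductive Head (D : Type) where
  | emp : Head D
  | star : Head D
  | data (d : D) : Head D

/-- A queue automaton. -/
structure QA (S A D : Type) where
  tr : S → Option A → Head D → List D → S → Prop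
  init : S
  fin : S → Prop

/-- Effect of a transition with head condition `h` enqueueing `δ` on the queue
contents (head of the queue is the rightmost element, enqueueing prepends). -/
inductive QStep {D : Type} : Head D → List D → List D → List D → Prop
  | emp (δ : List D) : QStep Head.emp δ [] δ
  | data (d : D) (δ ζ : List D) : QStep (Head.data d) δ (ζ ++ [d]) (δ ++ ζ)
  | star (δ ζ : List D) : QStep Head.star δ ζ (δ ++ ζ)

/-- The process graph of a queue automaton. -/
def QA.proc {S A D : Type} (Q : QA S A D) : LTS (S × List D) A where
  tr := fun c a c' => ∃ h δ, Q.tr c.1 a h δ c'.1 ∧ QStep h δ c.2 c'.2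
  fin := fun c => Q.fin c.1

/-- The queue automaton has finitely many transitions. -/
def QA.FiniteTrans {S A D : Type} (Q : QA S A D) : Prop :=
  Set.Finite {x : S × Option A × Head D × List D × S |
    Q.tr x.1 x.2.1 x.2.2.1 x.2.2.2.1 x.2.2.2.2}

inductive ABC where
  | a : ABC
  | b : ABC
  | c : ABC

inductive D12 where
  | one : D12
  | two : D12

inductive StABC where
  | s0 : StABC
  | s1 : StABC
  | s2 : StABC
  | s3 : StABC

/-- Transitions of the queue automaton of Figure 2. -/
inductive abcTr : StABC → Option ABC → Head D12 → List D12 → StABC → Prop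
  | la : abcTr StABC.s0 (some ABC.a) Head.star [D12.one] StABC.s0
  | b0 : abcTr StABC.s0 (some ABC.b) (Head.data D12.one) [D12.two] StABC.s1
  | b1 : abcTr StABC.s1 (some ABC.b) (Head.data D12.one) [D12.two] StABC.s1
  | c1 : abcTr StABC.s1 (some ABC.c) (Head.data D12.two) [] StABC.s2
  | c2 : abcTr StABC.s2 (some ABC.c) (Head.data D12.two) [] StABC.s2
  | done : abcTr StABC.s2 none Head.emp [] StABC.s3

/-- The queue automaton of Figure 2. -/
def abcQA : QA StABC ABC D12 :=
  { tr := abcTr, init := StABC.s0, fin := fun s => s = StABC.s3 }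

open StABC ABC D12 in
/-- Characterisation of the words accepted from each configuration. -/
def Pabc : StABC → List D12 → List ABC → Prop
  | s0, ζ, w => ∃ k m j, ζ = List.replicate k two ++ List.replicate m one ∧
      w = List.replicate j a ++ List.replicate (m+j) b ++ List.replicate (k+m+j) c ∧
      0 < m + j ∧ (0 < k → j = 0)
  | s1, ζ, w => ∃ k m, ζ = List.replicate k two ++ List.replicate m one ∧
      w = List.replicate m b ++ List.replicate (k+m) c
  | s2, ζ, w => ∃ k, ζ = List.replicate k two ∧ w = List.replicate k c
  | s3, _, w => w = []

lemma WStep.append' {S A : Type} {L : LTS S A} {s t u : S} {w w' : List A}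
    (h1 : WStep L s w t) (h2 : WStep L t w' u) : WStep L s (w ++ w') u := by
  induction h1 with
  | refl => simpa
  | act ht _ ih => exact WStep.act ht (ih h2)
  | tau ht _ ih => exact WStep.tau ht (ih h2)

open StABC ABC D12

lemma stepA (ζ : List D12) :
    abcQA.proc.tr (s0, ζ) (some a) (s0, one :: ζ) :=
  ⟨Head.star, [one], abcTr.la, QStep.star [one] ζ⟩

lemma stepB0 (ζ : List D12) :
    abcQA.proc.tr (s0, ζ ++ [one]) (some b) (s1, two :: ζ) :=
  ⟨Head.data one, [two], abcTr.b0, QStep.data one [two] ζ⟩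

lemma stepB1 (ζ : List D12) :
    abcQA.proc.tr (s1, ζ ++ [one]) (some b) (s1, two :: ζ) :=
  ⟨Head.data one, [two], abcTr.b1, QStep.data one [two] ζ⟩

lemma stepC1 (ζ : List D12) :
    abcQA.proc.tr (s1, ζ ++ [two]) (some c) (s2, ζ) := by
  refine ⟨Head.data two, [], abcTr.c1, ?_⟩
  simpa using QStep.data two [] ζ

lemma stepC2 (ζ : List D12) :
    abcQA.proc.tr (s2, ζ ++ [two]) (some c) (s2, ζ) := by
  refine ⟨Head.data two, [], abcTr.c2, ?_⟩
  simpa using QStep.data two [] ζ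

lemma stepDone : abcQA.proc.tr (s2, []) none (s3, []) :=
  ⟨Head.emp, [], abcTr.done, QStep.emp []⟩

lemma runA : ∀ (j : ℕ) (ζ : List D12),
    WStep abcQA.proc (s0, ζ) (List.replicate j a) (s0, List.replicate j one ++ ζ) := by
  intro j
  induction j with
  | zero => intro ζ; simpa using WStep.refl (s0, ζ)
  | succ j ih =>
    intro ζ
    rw [List.replicate_succ]
    refine WStep.act (stepA ζ) ?_
    have := ih (one :: ζ)
    rwa [show List.replicate j one ++ (one :: ζ)
        = List.replicate (j+1) one ++ ζ by
      rw [List.replicate_succ']; simp] at this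

lemma runB : ∀ (m k : ℕ),
    WStep abcQA.proc (s1, List.replicate k two ++ List.replicate m one)
      (List.replicate m b) (s1, List.replicate (k+m) two) := by
  intro m
  induction m with
  | zero => intro k; simpa using WStep.refl (s1, List.replicate k two)
  | succ m ih =>
    intro k
    have hq : List.replicate k two ++ List.replicate (m+1) one
        = (List.replicate k two ++ List.replicate m one) ++ [one] := by
      rw [List.replicate_succ' (n := m) (a := one)]; simp
    rw [hq]
    have hstep := stepB1 (List.replicate k two ++ List.replicate m one)
    refine WStep.act hstep ?_
    have h2 : (two :: (List.replicate k two ++ List.replicate m one))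
        = List.replicate (k+1) two ++ List.replicate m one := rfl
    rw [h2]
    have := ih (k+1)
    rwa [show k + 1 + m = k + (m+1) by omega] at this

lemma runC : ∀ (k : ℕ),
    WStep abcQA.proc (s2, List.replicate k two) (List.replicate k c) (s2, []) := by
  intro k
  induction k with
  | zero => exact WStep.refl _
  | succ k ih =>
    have := WStep.act (stepC2 (List.replicate k two)) ih
    rwa [← List.replicate_succ' (n := k) (a := two),
      show (c :: List.replicate k c : List ABC) = List.replicate (k+1) c from rfl] at this

/-- `two :: ζ = 2ᵏ1ᵐ` forces `k ≥ 1`. -/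
lemma cons_two_eq {ζ : List D12} {k m : ℕ}
    (h : two :: ζ = List.replicate k two ++ List.replicate m one) :
    ∃ k', k = k' + 1 ∧ ζ = List.replicate k' two ++ List.replicate m one := by
  match k with
  | 0 =>
    exfalso
    match m with
    | 0 => simp at h
    | m+1 => rw [List.replicate_succ] at h; simp at h
  | k'+1 =>
    rw [List.replicate_succ] at h
    simp only [List.cons_append, List.cons.injEq, true_and] at h
    exact ⟨k', rfl, h⟩

/-- `one :: ζ = 2ᵏ1ᵐ` forces `k = 0` and `m ≥ 1`. -/
lemma cons_one_eq {ζ : List D12} {k m : ℕ}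
    (h : one :: ζ = List.replicate k two ++ List.replicate m one) :
    ∃ m', k = 0 ∧ m = m' + 1 ∧ ζ = List.replicate m' one := by
  match k with
  | k'+1 =>
    exfalso; rw [List.replicate_succ] at h; simp at h
  | 0 =>
    simp only [List.replicate, List.nil_append] at h
    match m with
    | 0 => simp at h
    | m'+1 =>
      rw [List.replicate_succ] at h
      simp only [List.cons.injEq, true_and] at h
      exact ⟨m', rfl, rfl, h⟩

lemma accept_char {cfg : StABC × List D12} {w : List ABC} {t : StABC × List D12}
    (h : WStep abcQA.proc cfg w t) (hf : abcQA.proc.fin t) : Pabc cfg.1 cfg.2 w := by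
  induction h with
  | refl s =>
    obtain ⟨st, ζ⟩ := s
    have : st = s3 := hf
    subst this
    simp [Pabc]
  | @act s t u aa w htr _ ih =>
    obtain ⟨st, ζ⟩ := s
    obtain ⟨st', ζ'⟩ := t
    obtain ⟨h, δ, hT, hQ⟩ := htr
    have ih' := ih hf
    dsimp only at ih' ⊢
    cases hT with
    | la =>
      -- queue step: ζ' = one :: ζ
      cases hQ
      simp only [Pabc] at ih' ⊢
      try simp only [List.append_eq, List.nil_append, List.cons_append, List.singleton_append] at ih' ⊢
      obtain ⟨k, m, j, hζ, hw, hpos, hk⟩ := ih'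
      try simp only [List.singleton_append, List.cons_append, List.nil_append] at hζ
      obtain ⟨m', hk0, hm, hζ'⟩ := cons_one_eq hζ
      subst hk0; subst hm
      refine ⟨0, m', j+1, by simpa using hζ', ?_, by omega, by omega⟩
      rw [hw, show m' + 1 + j = m' + (j+1) by omega,
        show 0 + (m'+1) + j = 0 + m' + (j+1) by omega]
      rfl
    | b0 =>
      cases hQ with
      | data _ _ ζ'' =>
        simp only [Pabc] at ih' ⊢
        try simp only [List.append_eq, List.nil_append, List.cons_append, List.singleton_append] at ih' ⊢
        obtain ⟨k, m, hζ, hw⟩ := ih'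
        try simp only [List.singleton_append, List.cons_append, List.nil_append] at hζ
        obtain ⟨k', hk, hζ'⟩ := cons_two_eq hζ
        subst hk
        refine ⟨k', m+1, 0, ?_, ?_, by omega, fun _ => rfl⟩
        · rw [List.replicate_succ' (n := m) (a := one), hζ']; simp
        · rw [hw, show k' + 1 + m = k' + (m+1) + 0 by omega]
          rfl
    | b1 =>
      cases hQ with
      | data _ _ ζ'' =>
        simp only [Pabc] at ih' ⊢
        try simp only [List.append_eq, List.nil_append, List.cons_append, List.singleton_append] at ih' ⊢
        obtain ⟨k, m, hζ, hw⟩ := ih'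
        try simp only [List.singleton_append, List.cons_append, List.nil_append] at hζ
        obtain ⟨k', hk, hζ'⟩ := cons_two_eq hζ
        subst hk
        refine ⟨k', m+1, ?_, ?_⟩
        · rw [List.replicate_succ' (n := m) (a := one), hζ']; simp
        · rw [hw, show k' + 1 + m = k' + (m+1) by omega]
          rfl
    | c1 =>
      cases hQ with
      | data _ _ ζ'' =>
        simp only [Pabc] at ih' ⊢
        try simp only [List.append_eq, List.nil_append, List.cons_append, List.singleton_append] at ih' ⊢
        obtain ⟨K, hζ, hw⟩ := ih'
        try simp only [List.nil_append] at hζ ⊢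
        refine ⟨K+1, 0, ?_, ?_⟩
        · rw [List.replicate_succ' (n := K) (a := two), hζ]; try simp
        · rw [hw, show K + 1 + 0 = K + 1 by omega]
          rfl
    | c2 =>
      cases hQ with
      | data _ _ ζ'' =>
        simp only [Pabc] at ih' ⊢
        try simp only [List.append_eq, List.nil_append, List.cons_append, List.singleton_append] at ih' ⊢
        obtain ⟨K, hζ, hw⟩ := ih'
        try simp only [List.nil_append] at hζ ⊢
        refine ⟨K+1, ?_, ?_⟩
        · rw [List.replicate_succ' (n := K) (a := two), hζ]; try simp
        · rw [hw]; rfl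
  | @tau s t u w htr _ ih =>
    obtain ⟨st, ζ⟩ := s
    obtain ⟨st', ζ'⟩ := t
    obtain ⟨h, δ, hT, hQ⟩ := htr
    have ih' := ih hf
    dsimp only at ih' ⊢
    cases hT
    cases hQ
    simp only [Pabc] at ih' ⊢
    try simp only [List.append_eq, List.nil_append, List.cons_append, List.singleton_append] at ih' ⊢
    exact ⟨0, rfl, by simp [ih']⟩

/-- The queue automaton of Figure 2 accepts exactly the language
`{ aⁿbⁿcⁿ | n > 0 }`. -/
theorem abcQA_language :
    abcQA.proc.lang (abcQA.init, []) =
      { w : List ABC | ∃ n : ℕ, 0 < n ∧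
          w = List.replicate n ABC.a ++ List.replicate n ABC.b ++ List.replicate n ABC.c } := by
  ext w
  constructor
  · rintro ⟨t, hstep, hfin⟩
    have hp := accept_char hstep hfin
    obtain ⟨k, m, j, hζ, hw, hpos, hk⟩ := hp
    -- ζ = [] forces k = m = 0
    have hk0 : k = 0 ∧ m = 0 := by
      constructor
      · by_contra h
        have : 0 < (List.replicate k two ++ List.replicate m one).length := by
          simp; omega
        rw [← hζ] at this; simp at this
      · by_contra h
        have : 0 < (List.replicate k two ++ List.replicate m one).length := by
          simp; omega
        rw [← hζ] at this; simp at this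
    obtain ⟨hk0, hm0⟩ := hk0
    subst hk0; subst hm0
    exact ⟨j, by omega, by simpa using hw⟩
  · rintro ⟨n, hn, rfl⟩
    obtain ⟨n', rfl⟩ : ∃ n', n = n' + 1 := ⟨n - 1, by omega⟩
    refine ⟨(s3, []), ?_, rfl⟩
    have h1 := runA (n'+1) []
    simp only [List.append_nil] at h1
    have h2 : abcQA.proc.tr (s0, List.replicate (n'+1) one) (some b)
        (s1, List.replicate 1 two ++ List.replicate n' one) := by
      have := stepB0 (List.replicate n' one)
      rwa [← List.replicate_succ' ] at this
    have h3 := runB n' 1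
    have h4 : abcQA.proc.tr (s1, List.replicate (1+n') two) (some c)
        (s2, List.replicate n' two) := by
      have := stepC2
      have hc := stepC1 (List.replicate n' two)
      rwa [← List.replicate_succ', show n' + 1 = 1 + n' by omega] at hc
    have h5 := runC n'
    have h6 : WStep abcQA.proc (s2, []) ([] : List ABC) (s3, []) :=
      WStep.tau stepDone (WStep.refl _)
    have hrest : WStep abcQA.proc (s0, List.replicate (n'+1) one)
        (List.replicate (n'+1) b ++ List.replicate (n'+1) c) (s3, []) := by
      have htail : WStep abcQA.proc (s2, List.replicate n' two)
          (List.replicate n' c) (s3, []) := by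
        simpa using WStep.append' h5 h6
      have hs1 : WStep abcQA.proc (s1, List.replicate 1 two ++ List.replicate n' one)
          (List.replicate n' b ++ (c :: List.replicate n' c)) (s3, []) :=
        WStep.append' h3 (WStep.act h4 htail)
      have := WStep.act h2 hs1
      rwa [show (b :: (List.replicate n' b ++ (c :: List.replicate n' c)))
          = List.replicate (n'+1) b ++ List.replicate (n'+1) c by
        simp [List.replicate_succ]] at this
    change WStep abcQA.proc (s0, []) _ _
    simpa using WStep.append' h1 hrest
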